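/- Let tₖ ↓ 0 and let x^{tₖ} ∈ M^S(tₖ) be KKT points of the Scholtes regularization S(tₖ) with multipliers (η^{tₖ}, ν^{tₖ}) such that x^{tₖ} → x̄, where MPCC-LICQ holds at x̄ ∈ M, so that x̄ is C-stationary with unique multipliers (σ̄, ϱ̄). Then for all sufficiently large k: a01⁻(x̄) ⊆ H(x^{tₖ}) and a01⁺(x̄) ⊆ N₁(x^{tₖ}); a10⁻(x̄) ⊆ H(x^{tₖ}) and a10⁺(x̄) ⊆ N₂(x^{tₖ}); a00⁻(x̄) ⊆ H(x^{tₖ}) and a00⁺(x̄) ⊆ N₁(x^{tₖ}) ∩ N₂(x^{tₖ}). -/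

import Mathlib

open Filter Topology Set

namespace MPCCPaper

variable {n κ : ℕ}

/-- Differential of the `j`-th component of `F` at `x`. -/
noncomputable def Dc (F : (Fin n → ℝ) → Fin κ → ℝ) (j : Fin κ) (x : Fin n → ℝ) :
    (Fin n → ℝ) →L[ℝ] ℝ :=
  fderiv ℝ (fun y => F y j) x

/-- The MPCC feasible set `M`. -/
def Mset (F1 F2 : (Fin n → ℝ) → Fin κ → ℝ) : Set (Fin n → ℝ) :=
  {x | ∀ j, F1 x j * F2 x j = 0 ∧ 0 ≤ F1 x j ∧ 0 ≤ F2 x j}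

/-- Feasible set `M^S(t)` of the Scholtes regularization. -/
def MS (F1 F2 : (Fin n → ℝ) → Fin κ → ℝ) (t : ℝ) : Set (Fin n → ℝ) :=
  {x | ∀ j, F1 x j * F2 x j ≤ t ∧ 0 ≤ F1 x j ∧ 0 ≤ F2 x j}

/-- Feasible set `M^{S=}(t)` of the smoothing with equality constraints. -/
def MSeq (F1 F2 : (Fin n → ℝ) → Fin κ → ℝ) (t : ℝ) : Set (Fin n → ℝ) :=
  {x | ∀ j, F1 x j * F2 x j = t ∧ 0 ≤ F1 x j ∧ 0 ≤ F2 x j}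

def a01 (F1 F2 : (Fin n → ℝ) → Fin κ → ℝ) (x : Fin n → ℝ) : Set (Fin κ) :=
  {j | F1 x j = 0 ∧ 0 < F2 x j}

def a10 (F1 F2 : (Fin n → ℝ) → Fin κ → ℝ) (x : Fin n → ℝ) : Set (Fin κ) :=
  {j | 0 < F1 x j ∧ F2 x j = 0}

def a00 (F1 F2 : (Fin n → ℝ) → Fin κ → ℝ) (x : Fin n → ℝ) : Set (Fin κ) :=
  {j | F1 x j = 0 ∧ F2 x j = 0}

/-- Active set `H(x)` of the regularized constraints. -/
def Hset (F1 F2 : (Fin n → ℝ) → Fin κ → ℝ) (t : ℝ) (x : Fin n → ℝ) : Set (Fin κ) :=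
  {j | F1 x j * F2 x j = t}

def N1set (F1 : (Fin n → ℝ) → Fin κ → ℝ) (x : Fin n → ℝ) : Set (Fin κ) :=
  {j | F1 x j = 0}

def N2set (F2 : (Fin n → ℝ) → Fin κ → ℝ) (x : Fin n → ℝ) : Set (Fin κ) :=
  {j | F2 x j = 0}

/-- MPCC-tailored linear independence constraint qualification. -/
def MPCCLICQ (F1 F2 : (Fin n → ℝ) → Fin κ → ℝ) (x : Fin n → ℝ) : Prop :=
  LinearIndependent ℝ
    (Sum.elim
      (fun j : ↥(a01 F1 F2 x ∪ a00 F1 F2 x) => Dc F1 j.1 x)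
      (fun j : ↥(a10 F1 F2 x ∪ a00 F1 F2 x) => Dc F2 j.1 x))

/-- Gradient of the product constraint `F1_j · F2_j` at `x`. -/
noncomputable def gradProd (F1 F2 : (Fin n → ℝ) → Fin κ → ℝ) (j : Fin κ) (x : Fin n → ℝ) :
    (Fin n → ℝ) →L[ℝ] ℝ :=
  F2 x j • Dc F1 j x + F1 x j • Dc F2 j x

/-- LICQ for the Scholtes regularization `S(t)`. -/
def SLICQ (F1 F2 : (Fin n → ℝ) → Fin κ → ℝ) (t : ℝ) (x : Fin n → ℝ) : Prop :=
  LinearIndependent ℝ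
    (Sum.elim (fun j : ↥(Hset F1 F2 t x) => gradProd F1 F2 j.1 x)
      (Sum.elim (fun j : ↥(N1set F1 x) => Dc F1 j.1 x)
        (fun j : ↥(N2set F2 x) => Dc F2 j.1 x)))

/-- W-stationarity with prescribed multipliers (supported on the active index sets). -/
structure WStatWith (f : (Fin n → ℝ) → ℝ) (F1 F2 : (Fin n → ℝ) → Fin κ → ℝ)
    (x : Fin n → ℝ) (σ1 σ2 ϱ1 ϱ2 : Fin κ → ℝ) : Prop where
  feas : x ∈ Mset F1 F2
  supp_s1 : ∀ j, j ∉ a01 F1 F2 x → σ1 j = 0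
  supp_s2 : ∀ j, j ∉ a10 F1 F2 x → σ2 j = 0
  supp_r1 : ∀ j, j ∉ a00 F1 F2 x → ϱ1 j = 0
  supp_r2 : ∀ j, j ∉ a00 F1 F2 x → ϱ2 j = 0
  stat : fderiv ℝ f x =
    ∑ j, (σ1 j • Dc F1 j x + σ2 j • Dc F2 j x + ϱ1 j • Dc F1 j x + ϱ2 j • Dc F2 j x)

/-- C-stationarity with prescribed multipliers. -/
def CStatWith (f : (Fin n → ℝ) → ℝ) (F1 F2 : (Fin n → ℝ) → Fin κ → ℝ)
    (x : Fin n → ℝ) (σ1 σ2 ϱ1 ϱ2 : Fin κ → ℝ) : Prop :=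
  WStatWith f F1 F2 x σ1 σ2 ϱ1 ϱ2 ∧ ∀ j ∈ a00 F1 F2 x, 0 ≤ ϱ1 j * ϱ2 j

/-- S-stationarity with prescribed multipliers. -/
def SStatWith (f : (Fin n → ℝ) → ℝ) (F1 F2 : (Fin n → ℝ) → Fin κ → ℝ)
    (x : Fin n → ℝ) (σ1 σ2 ϱ1 ϱ2 : Fin κ → ℝ) : Prop :=
  WStatWith f F1 F2 x σ1 σ2 ϱ1 ϱ2 ∧ ∀ j ∈ a00 F1 F2 x, 0 ≤ ϱ1 j ∧ 0 ≤ ϱ2 j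

/-- The MPCC Lagrange function for given multipliers. -/
noncomputable def Lag (f : (Fin n → ℝ) → ℝ) (F1 F2 : (Fin n → ℝ) → Fin κ → ℝ)
    (σ1 σ2 ϱ1 ϱ2 : Fin κ → ℝ) (x : Fin n → ℝ) : ℝ :=
  f x - ∑ j, (σ1 j * F1 x j + σ2 j * F2 x j + ϱ1 j * F1 x j + ϱ2 j * F2 x j)

/-- The Hessian of `g` at `x` as a bilinear map, evaluated at `(ξ, ζ)`. -/
noncomputable def hBil (g : (Fin n → ℝ) → ℝ) (x ξ ζ : Fin n → ℝ) : ℝ :=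
  iteratedFDeriv ℝ 2 g x ![ξ, ζ]

/-- The Hessian quadratic form of `g` at `x`. -/
noncomputable def hQ (g : (Fin n → ℝ) → ℝ) (x ξ : Fin n → ℝ) : ℝ := hBil g x ξ ξ

/-- The tangent space `T_x` of MPCC at `x`. -/
def Tspace (F1 F2 : (Fin n → ℝ) → Fin κ → ℝ) (x : Fin n → ℝ) : Set (Fin n → ℝ) :=
  {ξ | (∀ j ∈ a01 F1 F2 x ∪ a00 F1 F2 x, Dc F1 j x ξ = 0) ∧
       (∀ j ∈ a10 F1 F2 x ∪ a00 F1 F2 x, Dc F2 j x ξ = 0)}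

/-- Nondegeneracy of a bilinear form on a set (subspace). -/
def NondegOn (B : (Fin n → ℝ) → (Fin n → ℝ) → ℝ) (T : Set (Fin n → ℝ)) : Prop :=
  ∀ ξ ∈ T, (∀ ζ ∈ T, B ξ ζ = 0) → ξ = 0

/-- `Q` has negative index `q` on `T`: `q` is the maximal dimension of a subspace of `T`
on which `Q` is negative definite. -/
def HasNegIndexOn (Q : (Fin n → ℝ) → ℝ) (T : Set (Fin n → ℝ)) (q : ℕ) : Prop :=
  (∃ W : Submodule ℝ (Fin n → ℝ), (W : Set (Fin n → ℝ)) ⊆ T ∧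
      Module.finrank ℝ ↥W = q ∧ ∀ ξ ∈ W, ξ ≠ 0 → Q ξ < 0) ∧
  (∀ W : Submodule ℝ (Fin n → ℝ), (W : Set (Fin n → ℝ)) ⊆ T →
      (∀ ξ ∈ W, ξ ≠ 0 → Q ξ < 0) → Module.finrank ℝ ↥W ≤ q)

/-- Nondegenerate C-stationary point (NDC1, NDC2, NDC3) with prescribed multipliers. -/
def NondegCStat (f : (Fin n → ℝ) → ℝ) (F1 F2 : (Fin n → ℝ) → Fin κ → ℝ)
    (x : Fin n → ℝ) (σ1 σ2 ϱ1 ϱ2 : Fin κ → ℝ) : Prop :=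
  CStatWith f F1 F2 x σ1 σ2 ϱ1 ϱ2 ∧ MPCCLICQ F1 F2 x ∧
  (∀ j ∈ a00 F1 F2 x, 0 < ϱ1 j * ϱ2 j) ∧
  NondegOn (hBil (Lag f F1 F2 σ1 σ2 ϱ1 ϱ2) x) (Tspace F1 F2 x)

/-- Condition NDC4: non-biactive multipliers do not vanish. -/
def NDC4 (F1 F2 : (Fin n → ℝ) → Fin κ → ℝ) (x : Fin n → ℝ) (σ1 σ2 : Fin κ → ℝ) : Prop :=
  (∀ j ∈ a01 F1 F2 x, σ1 j ≠ 0) ∧ (∀ j ∈ a10 F1 F2 x, σ2 j ≠ 0)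

/-- The biactive index: number of negative biactive multiplier pairs. -/
noncomputable def BIndex (F1 F2 : (Fin n → ℝ) → Fin κ → ℝ) (x : Fin n → ℝ)
    (ϱ1 ϱ2 : Fin κ → ℝ) : ℕ :=
  {j | j ∈ a00 F1 F2 x ∧ ϱ1 j < 0 ∧ ϱ2 j < 0}.ncard

/-- The C-index of a C-stationary point equals `c`. -/
def HasCIndex (f : (Fin n → ℝ) → ℝ) (F1 F2 : (Fin n → ℝ) → Fin κ → ℝ)
    (x : Fin n → ℝ) (σ1 σ2 ϱ1 ϱ2 : Fin κ → ℝ) (c : ℕ) : Prop :=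
  ∃ q : ℕ,
    HasNegIndexOn (hQ (Lag f F1 F2 σ1 σ2 ϱ1 ϱ2) x) (Tspace F1 F2 x) q ∧
    c = q + BIndex F1 F2 x ϱ1 ϱ2

/-- Karush-Kuhn-Tucker point of the Scholtes regularization `S(t)` with multipliers. -/
structure KKTWith (f : (Fin n → ℝ) → ℝ) (F1 F2 : (Fin n → ℝ) → Fin κ → ℝ)
    (t : ℝ) (x : Fin n → ℝ) (η ν1 ν2 : Fin κ → ℝ) : Prop where
  feas : x ∈ MS F1 F2 t
  eta_nn : ∀ j, 0 ≤ η j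
  nu1_nn : ∀ j, 0 ≤ ν1 j
  nu2_nn : ∀ j, 0 ≤ ν2 j
  comp_eta : ∀ j, η j * (t - F1 x j * F2 x j) = 0
  comp_nu1 : ∀ j, ν1 j * F1 x j = 0
  comp_nu2 : ∀ j, ν2 j * F2 x j = 0
  stat : fderiv ℝ f x =
    ∑ j, (-(η j) • gradProd F1 F2 j x + ν1 j • Dc F1 j x + ν2 j • Dc F2 j x)

/-- The Lagrange function of the Scholtes regularization `S(t)`. -/
noncomputable def LagS (f : (Fin n → ℝ) → ℝ) (F1 F2 : (Fin n → ℝ) → Fin κ → ℝ)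
    (t : ℝ) (η ν1 ν2 : Fin κ → ℝ) (x : Fin n → ℝ) : ℝ :=
  f x - ∑ j, (η j * (t - F1 x j * F2 x j) + ν1 j * F1 x j + ν2 j * F2 x j)

/-- The tangent space `T^S_x` of `S(t)` at `x`. -/
def TspaceS (F1 F2 : (Fin n → ℝ) → Fin κ → ℝ) (t : ℝ) (x : Fin n → ℝ) :
    Set (Fin n → ℝ) :=
  {ξ | (∀ j ∈ Hset F1 F2 t x, gradProd F1 F2 j x ξ = 0) ∧
       (∀ j ∈ N1set F1 x, Dc F1 j x ξ = 0) ∧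
       (∀ j ∈ N2set F2 x, Dc F2 j x ξ = 0)}

/-- Nondegenerate KKT point of `S(t)` (ND1, ND2, ND3) with prescribed multipliers. -/
def NondegKKT (f : (Fin n → ℝ) → ℝ) (F1 F2 : (Fin n → ℝ) → Fin κ → ℝ)
    (t : ℝ) (x : Fin n → ℝ) (η ν1 ν2 : Fin κ → ℝ) : Prop :=
  KKTWith f F1 F2 t x η ν1 ν2 ∧ SLICQ F1 F2 t x ∧
  (∀ j ∈ Hset F1 F2 t x, 0 < η j) ∧
  (∀ j ∈ N1set F1 x, 0 < ν1 j) ∧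
  (∀ j ∈ N2set F2 x, 0 < ν2 j) ∧
  NondegOn (hBil (LagS f F1 F2 t η ν1 ν2) x) (TspaceS F1 F2 t x)

/-- KKT point of the smoothing `S^=(t)` with multipliers. -/
structure KKTEqWith (f : (Fin n → ℝ) → ℝ) (F1 F2 : (Fin n → ℝ) → Fin κ → ℝ)
    (t : ℝ) (x : Fin n → ℝ) (lam ν1 ν2 : Fin κ → ℝ) : Prop where
  feas : x ∈ MSeq F1 F2 t
  nu1_nn : ∀ j, 0 ≤ ν1 j
  nu2_nn : ∀ j, 0 ≤ ν2 j
  comp_nu1 : ∀ j, ν1 j * F1 x j = 0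
  comp_nu2 : ∀ j, ν2 j * F2 x j = 0
  stat : fderiv ℝ f x =
    ∑ j, (lam j • gradProd F1 F2 j x + ν1 j • Dc F1 j x + ν2 j • Dc F2 j x)

/-- The Lagrange function of the smoothing `S^=(t)`. -/
noncomputable def LagSeq (f : (Fin n → ℝ) → ℝ) (F1 F2 : (Fin n → ℝ) → Fin κ → ℝ)
    (t : ℝ) (lam ν1 ν2 : Fin κ → ℝ) (x : Fin n → ℝ) : ℝ :=
  f x - ∑ j, (lam j * (F1 x j * F2 x j - t) + ν1 j * F1 x j + ν2 j * F2 x j)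

/-- The tangent space `T^{S=}_x` of `S^=(t)` at `x`. -/
def TspaceSeq (F1 F2 : (Fin n → ℝ) → Fin κ → ℝ) (x : Fin n → ℝ) : Set (Fin n → ℝ) :=
  {ξ | (∀ j, gradProd F1 F2 j x ξ = 0) ∧
       (∀ j, F1 x j = 0 → Dc F1 j x ξ = 0) ∧
       (∀ j, F2 x j = 0 → Dc F2 j x ξ = 0)}

/-- LICQ for the smoothing `S^=(t)` at `x`: gradients of all active constraints
(all equality constraints together with the active bound constraints) are linearly
independent. -/
def SeqLICQ (F1 F2 : (Fin n → ℝ) → Fin κ → ℝ) (x : Fin n → ℝ) : Prop :=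
  LinearIndependent ℝ
    (Sum.elim (fun j : Fin κ => gradProd F1 F2 j x)
      (Sum.elim (fun j : ↥(N1set F1 x) => Dc F1 j.1 x)
        (fun j : ↥(N2set F2 x) => Dc F2 j.1 x)))

/-- Nondegenerate KKT point of the smoothing `S^=(t)` with prescribed multipliers. -/
def NondegKKTEq (f : (Fin n → ℝ) → ℝ) (F1 F2 : (Fin n → ℝ) → Fin κ → ℝ)
    (t : ℝ) (x : Fin n → ℝ) (lam ν1 ν2 : Fin κ → ℝ) : Prop :=
  KKTEqWith f F1 F2 t x lam ν1 ν2 ∧ SeqLICQ F1 F2 x ∧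
  (∀ j ∈ N1set F1 x, 0 < ν1 j) ∧
  (∀ j ∈ N2set F2 x, 0 < ν2 j) ∧
  NondegOn (hBil (LagSeq f F1 F2 t lam ν1 ν2) x) (TspaceSeq F1 F2 x)

/-- The critical cone `C_x` associated with an S-stationary point and its multipliers. -/
def Ccone (F1 F2 : (Fin n → ℝ) → Fin κ → ℝ) (x : Fin n → ℝ)
    (σ1 σ2 ϱ1 ϱ2 : Fin κ → ℝ) : Set (Fin n → ℝ) :=
  {ξ | (∀ j, ((j ∈ a01 F1 F2 x ∧ σ1 j ≠ 0) ∨ (j ∈ a00 F1 F2 x ∧ 0 < ϱ1 j)) →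
        Dc F1 j x ξ = 0) ∧
       (∀ j, ((j ∈ a10 F1 F2 x ∧ σ2 j ≠ 0) ∨ (j ∈ a00 F1 F2 x ∧ 0 < ϱ2 j)) →
        Dc F2 j x ξ = 0)}

/-- The cone `C^=_x` of critical directions used for MPCC-SOC. -/
def CconeEq (F1 F2 : (Fin n → ℝ) → Fin κ → ℝ) (x : Fin n → ℝ)
    (ϱ1 ϱ2 : Fin κ → ℝ) : Set (Fin n → ℝ) :=
  {ξ | (∀ j, (j ∈ a01 F1 F2 x ∨ (j ∈ a00 F1 F2 x ∧ 0 < ϱ1 j)) → Dc F1 j x ξ = 0) ∧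
       (∀ j, (j ∈ a10 F1 F2 x ∨ (j ∈ a00 F1 F2 x ∧ 0 < ϱ2 j)) → Dc F2 j x ξ = 0) ∧
       (∀ j ∈ a00 F1 F2 x, ϱ1 j = 0 → 0 ≤ Dc F1 j x ξ) ∧
       (∀ j ∈ a00 F1 F2 x, ϱ2 j = 0 → 0 ≤ Dc F2 j x ξ)}

/-- Strong second order sufficiency condition. -/
def SSOSC (f : (Fin n → ℝ) → ℝ) (F1 F2 : (Fin n → ℝ) → Fin κ → ℝ)
    (x : Fin n → ℝ) (σ1 σ2 ϱ1 ϱ2 : Fin κ → ℝ) : Prop :=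
  ∀ ξ ∈ Ccone F1 F2 x σ1 σ2 ϱ1 ϱ2, ξ ≠ 0 → 0 < hQ (Lag f F1 F2 σ1 σ2 ϱ1 ϱ2) x ξ

/-- Second order condition for MPCC (MPCC-SOC). -/
def MPCCSOC (f : (Fin n → ℝ) → ℝ) (F1 F2 : (Fin n → ℝ) → Fin κ → ℝ)
    (x : Fin n → ℝ) (σ1 σ2 ϱ1 ϱ2 : Fin κ → ℝ) : Prop :=
  ∀ ξ ∈ CconeEq F1 F2 x ϱ1 ϱ2, ξ ≠ 0 → 0 < hQ (Lag f F1 F2 σ1 σ2 ϱ1 ϱ2) x ξ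


private lemma exists_antilip_of_li {ι : Type*} [Fintype ι] {E : Type*} [NormedAddCommGroup E]
    [NormedSpace ℝ E] (w : ι → E) (hw : LinearIndependent ℝ w) :
    ∃ r > (0:ℝ), ∀ c : ι → ℝ, r * ‖c‖ ≤ ‖∑ i, c i • w i‖ := by
  classical
  let T : (ι → ℝ) →ₗ[ℝ] E :=
    { toFun := fun c => ∑ i, c i • w i
      map_add' := by intro a b; simp [add_smul, Finset.sum_add_distrib]
      map_smul' := by intro m a; simp [smul_smul, Finset.smul_sum]  }
  have hker : LinearMap.ker T = ⊥ := by
    rw [LinearMap.ker_eq_bot']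
    intro c hc
    funext i
    exact Fintype.linearIndependent_iff.mp hw c hc i
  obtain ⟨K, hK, hA⟩ := LinearMap.exists_antilipschitzWith T hker
  refine ⟨(K:ℝ)⁻¹, by positivity, fun c => ?_⟩
  have h := hA.le_mul_dist c 0
  simp only [dist_zero_right, map_zero, dist_eq_norm, sub_zero] at h
  calc (K:ℝ)⁻¹ * ‖c‖ ≤ (K:ℝ)⁻¹ * ((K:ℝ) * ‖T c‖) :=
      mul_le_mul_of_nonneg_left h (by positivity)
    _ = ‖T c‖ := by
        have hK' : (0:ℝ) < (K:ℝ) := hK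
        field_simp
    _ = ‖∑ i, c i • w i‖ := rfl

set_option maxHeartbeats 2000000 in
/-- eventual inclusions of the signed active index subsets of the limiting
C-stationary point into the active index sets of the approximating KKT points. -/
theorem scholtes_active_index_sets
    {n κ : ℕ} (f : (Fin n → ℝ) → ℝ) (F1 F2 : (Fin n → ℝ) → Fin κ → ℝ)
    (hf : ContDiff ℝ 2 f) (hF1 : ContDiff ℝ 2 F1) (hF2 : ContDiff ℝ 2 F2)
    (t : ℕ → ℝ) (htpos : ∀ k, 0 < t k) (ht0 : Tendsto t atTop (𝓝 0))
    (x : ℕ → Fin n → ℝ) (η ν1 ν2 : ℕ → Fin κ → ℝ)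
    (hkkt : ∀ k, KKTWith f F1 F2 (t k) (x k) (η k) (ν1 k) (ν2 k))
    (xbar : Fin n → ℝ) (hxlim : Tendsto x atTop (𝓝 xbar))
    (hfeas : xbar ∈ Mset F1 F2) (hlicq : MPCCLICQ F1 F2 xbar)
    (σ1 σ2 ϱ1 ϱ2 : Fin κ → ℝ) (hcstat : CStatWith f F1 F2 xbar σ1 σ2 ϱ1 ϱ2) :
    ∃ N : ℕ, ∀ k ≥ N,
      {j | j ∈ a01 F1 F2 xbar ∧ σ1 j < 0} ⊆ Hset F1 F2 (t k) (x k) ∧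
      {j | j ∈ a01 F1 F2 xbar ∧ 0 < σ1 j} ⊆ N1set F1 (x k) ∧
      {j | j ∈ a10 F1 F2 xbar ∧ σ2 j < 0} ⊆ Hset F1 F2 (t k) (x k) ∧
      {j | j ∈ a10 F1 F2 xbar ∧ 0 < σ2 j} ⊆ N2set F2 (x k) ∧
      {j | j ∈ a00 F1 F2 xbar ∧ ϱ1 j < 0 ∧ ϱ2 j < 0} ⊆ Hset F1 F2 (t k) (x k) ∧
      {j | j ∈ a00 F1 F2 xbar ∧ 0 < ϱ1 j ∧ 0 < ϱ2 j} ⊆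
        N1set F1 (x k) ∩ N2set F2 (x k) := by
  classical
  obtain ⟨hwstat, -⟩ := hcstat
  -- continuity and convergence facts
  have hxF1 : ∀ j, Tendsto (fun k => F1 (x k) j) atTop (𝓝 (F1 xbar j)) :=
    fun j => (((contDiff_pi.mp hF1 j).continuous).tendsto xbar).comp hxlim
  have hxF2 : ∀ j, Tendsto (fun k => F2 (x k) j) atTop (𝓝 (F2 xbar j)) :=
    fun j => (((contDiff_pi.mp hF2 j).continuous).tendsto xbar).comp hxlim
  have hxD1 : ∀ j, Tendsto (fun k => Dc F1 j (x k)) atTop (𝓝 (Dc F1 j xbar)) :=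
    fun j => (((contDiff_pi.mp hF1 j).continuous_fderiv (by simp)).tendsto xbar).comp hxlim
  have hxD2 : ∀ j, Tendsto (fun k => Dc F2 j (x k)) atTop (𝓝 (Dc F2 j xbar)) :=
    fun j => (((contDiff_pi.mp hF2 j).continuous_fderiv (by simp)).tendsto xbar).comp hxlim
  have hxDf : Tendsto (fun k => fderiv ℝ f (x k)) atTop (𝓝 (fderiv ℝ f xbar)) :=
    ((hf.continuous_fderiv (by simp)).tendsto xbar).comp hxlim
  set A1 : Set (Fin κ) := a01 F1 F2 xbar ∪ a00 F1 F2 xbar with hA1def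
  set A2 : Set (Fin κ) := a10 F1 F2 xbar ∪ a00 F1 F2 xbar with hA2def
  have hnA1 : ∀ j, j ∉ A1 → 0 < F1 xbar j ∧ F2 xbar j = 0 := by
    intro j hj
    rw [hA1def] at hj
    obtain ⟨hprod, h1, h2⟩ := hfeas j
    have hne : F1 xbar j ≠ 0 := by
      intro h0
      rcases lt_or_eq_of_le h2 with h2' | h2'
      · exact hj (Set.mem_union_left _ ⟨h0, h2'⟩)
      · exact hj (Set.mem_union_right _ ⟨h0, h2'.symm⟩)
    refine ⟨lt_of_le_of_ne h1 (Ne.symm hne), ?_⟩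
    rcases mul_eq_zero.mp hprod with h | h
    · exact absurd h hne
    · exact h
  have hnA2 : ∀ j, j ∉ A2 → 0 < F2 xbar j ∧ F1 xbar j = 0 := by
    intro j hj
    rw [hA2def] at hj
    obtain ⟨hprod, h1, h2⟩ := hfeas j
    have hne : F2 xbar j ≠ 0 := by
      intro h0
      rcases lt_or_eq_of_le h1 with h1' | h1'
      · exact hj (Set.mem_union_left _ ⟨h1', h0⟩)
      · exact hj (Set.mem_union_right _ ⟨h1'.symm, h0⟩)
    refine ⟨lt_of_le_of_ne h2 (Ne.symm hne), ?_⟩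
    rcases mul_eq_zero.mp hprod with h | h
    · exact h
    · exact absurd h hne
  haveI fA1 : Fintype ↥A1 := (Set.toFinite A1).fintype
  haveI fA2 : Fintype ↥A2 := (Set.toFinite A2).fintype
  set Wb : (↥A1 ⊕ ↥A2) → ((Fin n → ℝ) →L[ℝ] ℝ) :=
    Sum.elim (fun j => Dc F1 j.1 xbar) (fun j => Dc F2 j.1 xbar) with hWbdef
  have hli : LinearIndependent ℝ Wb := hlicq
  obtain ⟨r, hr, hanti⟩ := exists_antilip_of_li Wb hli
  set ck : ℕ → (↥A1 ⊕ ↥A2) → ℝ := fun k =>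
    Sum.elim (fun j => ν1 k j.1 - η k j.1 * F2 (x k) j.1)
      (fun j => ν2 k j.1 - η k j.1 * F1 (x k) j.1) with hckdef
  set cb : (↥A1 ⊕ ↥A2) → ℝ :=
    Sum.elim (fun j => σ1 j.1 + ϱ1 j.1) (fun j => σ2 j.1 + ϱ2 j.1) with hcbdef
  set Wk : ℕ → (↥A1 ⊕ ↥A2) → ((Fin n → ℝ) →L[ℝ] ℝ) := fun k =>
    Sum.elim (fun j => Dc F1 j.1 (x k)) (fun j => Dc F2 j.1 (x k)) with hWkdef
  set g1 : ℕ → Fin κ → ((Fin n → ℝ) →L[ℝ] ℝ) :=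
    fun k j => (ν1 k j - η k j * F2 (x k) j) • Dc F1 j (x k) with hg1def
  set g2 : ℕ → Fin κ → ((Fin n → ℝ) →L[ℝ] ℝ) :=
    fun k j => (ν2 k j - η k j * F1 (x k) j) • Dc F2 j (x k) with hg2def
  have hstat : ∀ k, fderiv ℝ f (x k) = (∑ j, g1 k j) + ∑ j, g2 k j := by
    intro k
    rw [(hkkt k).stat, ← Finset.sum_add_distrib]
    refine Finset.sum_congr rfl fun j _ => ?_
    simp only [hg1def, hg2def, gradProd]
    module
  set Rk : ℕ → ((Fin n → ℝ) →L[ℝ] ℝ) := fun k =>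
    (∑ j ∈ A1.toFinsetᶜ, g1 k j) + ∑ j ∈ A2.toFinsetᶜ, g2 k j with hRkdef
  have hsplit : ∀ k, fderiv ℝ f (x k) = (∑ i, ck k i • Wk k i) + Rk k := by
    intro k
    have e1 : (∑ i, ck k i • Wk k i)
        = (∑ j ∈ A1.toFinset, g1 k j) + ∑ j ∈ A2.toFinset, g2 k j := by
      rw [Fintype.sum_sum_type, ← Finset.sum_set_coe (f := g1 k) A1,
        ← Finset.sum_set_coe (f := g2 k) A2]
      simp only [hckdef, hWkdef, hg1def, hg2def, Sum.elim_inl, Sum.elim_inr]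
    rw [hstat k, e1]
    simp only [hRkdef]
    rw [← Finset.sum_add_sum_compl A1.toFinset (g1 k),
      ← Finset.sum_add_sum_compl A2.toFinset (g2 k)]
    abel
  have hpos1 : ∀ᶠ k in atTop, ∀ j, j ∉ A1 → 0 < F1 (x k) j := by
    rw [eventually_all]
    intro j
    by_cases hj : j ∉ A1
    · exact ((hxF1 j).eventually_const_lt (hnA1 j hj).1).mono fun k hk _ => hk
    · exact Eventually.of_forall fun k hcon => absurd hcon hj
  have hpos2 : ∀ᶠ k in atTop, ∀ j, j ∉ A2 → 0 < F2 (x k) j := by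
    rw [eventually_all]
    intro j
    by_cases hj : j ∉ A2
    · exact ((hxF2 j).eventually_const_lt (hnA2 j hj).1).mono fun k hk _ => hk
    · exact Eventually.of_forall fun k hcon => absurd hcon hj
  set d2 : ℕ → ℝ := fun k =>
    (∑ j ∈ A1.toFinsetᶜ, (F2 (x k) j / F1 (x k) j) * ‖Dc F1 j (x k)‖)
    + ∑ j ∈ A2.toFinsetᶜ, (F1 (x k) j / F2 (x k) j) * ‖Dc F2 j (x k)‖ with hd2def
  have hd2nn : ∀ᶠ k in atTop, 0 ≤ d2 k := by
    filter_upwards [hpos1, hpos2] with k h1 h2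
    simp only [hd2def]
    have t1 : (0:ℝ) ≤ ∑ j ∈ A1.toFinsetᶜ, (F2 (x k) j / F1 (x k) j) * ‖Dc F1 j (x k)‖ := by
      refine Finset.sum_nonneg fun j hj => ?_
      have hj' : j ∉ A1 := by
        rw [Finset.mem_compl, Set.mem_toFinset] at hj; exact hj
      exact mul_nonneg (div_nonneg ((hkkt k).feas j).2.2 (h1 j hj').le) (norm_nonneg _)
    have t2 : (0:ℝ) ≤ ∑ j ∈ A2.toFinsetᶜ, (F1 (x k) j / F2 (x k) j) * ‖Dc F2 j (x k)‖ := by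
      refine Finset.sum_nonneg fun j hj => ?_
      have hj' : j ∉ A2 := by
        rw [Finset.mem_compl, Set.mem_toFinset] at hj; exact hj
      exact mul_nonneg (div_nonneg ((hkkt k).feas j).2.1 (h2 j hj').le) (norm_nonneg _)
    linarith
  have hresbound : ∀ᶠ k in atTop, ‖Rk k‖ ≤ d2 k * ‖ck k‖ := by
    filter_upwards [hpos1, hpos2] with k h1 h2
    simp only [hRkdef, hd2def]
    have key1 : ∀ j ∈ A1.toFinsetᶜ,
        ‖g1 k j‖ ≤ ((F2 (x k) j / F1 (x k) j) * ‖Dc F1 j (x k)‖) * ‖ck k‖ := by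
      intro j hjf
      have hj : j ∉ A1 := by rw [Finset.mem_compl, Set.mem_toFinset] at hjf; exact hjf
      have hF1p : 0 < F1 (x k) j := h1 j hj
      have hF2nn : 0 ≤ F2 (x k) j := ((hkkt k).feas j).2.2
      have hjA2 : j ∈ A2 := by
        rw [hA2def]; exact Set.mem_union_left _ ⟨(hnA1 j hj).1, (hnA1 j hj).2⟩
      have hν1 : ν1 k j = 0 := by
        rcases mul_eq_zero.mp ((hkkt k).comp_nu1 j) with h | h
        · exact h
        · exact absurd h (ne_of_gt hF1p)
      have hcoef : |ν1 k j - η k j * F2 (x k) j|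
          ≤ (F2 (x k) j / F1 (x k) j) * |ν2 k j - η k j * F1 (x k) j| := by
        by_cases hη : η k j = 0
        · simp only [hν1, hη, zero_mul, sub_zero, zero_sub, abs_neg, abs_zero]
          exact mul_nonneg (div_nonneg hF2nn hF1p.le) (abs_nonneg _)
        · have hteq : F1 (x k) j * F2 (x k) j = t k := by
            rcases mul_eq_zero.mp ((hkkt k).comp_eta j) with h | h
            · exact absurd h hη
            · linarith
          have hF2p : 0 < F2 (x k) j := by
            by_contra hcon
            push_neg at hcon
            nlinarith [htpos k, mul_nonneg hF1p.le (neg_nonneg.mpr hcon)]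
          have hν2 : ν2 k j = 0 := by
            rcases mul_eq_zero.mp ((hkkt k).comp_nu2 j) with h | h
            · exact h
            · exact absurd h (ne_of_gt hF2p)
          rw [hν1, hν2, zero_sub, zero_sub, abs_neg, abs_neg, abs_mul, abs_mul,
            abs_of_nonneg ((hkkt k).eta_nn j), abs_of_nonneg hF2p.le, abs_of_nonneg hF1p.le]
          have hq : F2 (x k) j / F1 (x k) j * (η k j * F1 (x k) j) = η k j * F2 (x k) j := by
            field_simp
          exact le_of_eq hq.symm
      have hb : |ν2 k j - η k j * F1 (x k) j| ≤ ‖ck k‖ := by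
        have hcki : ck k (Sum.inr ⟨j, hjA2⟩) = ν2 k j - η k j * F1 (x k) j := by
          simp only [hckdef, Sum.elim_inr]
        calc |ν2 k j - η k j * F1 (x k) j| = ‖ck k (Sum.inr ⟨j, hjA2⟩)‖ := by
              rw [hcki, Real.norm_eq_abs]
          _ ≤ ‖ck k‖ := norm_le_pi_norm _ _
      calc ‖g1 k j‖ = |ν1 k j - η k j * F2 (x k) j| * ‖Dc F1 j (x k)‖ := by
            simp only [hg1def]
            rw [norm_smul (ν1 k j - η k j * F2 (x k) j) (Dc F1 j (x k)), Real.norm_eq_abs]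
        _ ≤ ((F2 (x k) j / F1 (x k) j) * |ν2 k j - η k j * F1 (x k) j|) * ‖Dc F1 j (x k)‖ :=
            mul_le_mul_of_nonneg_right hcoef (norm_nonneg _)
        _ = ((F2 (x k) j / F1 (x k) j) * ‖Dc F1 j (x k)‖) * |ν2 k j - η k j * F1 (x k) j| := by
            ring
        _ ≤ ((F2 (x k) j / F1 (x k) j) * ‖Dc F1 j (x k)‖) * ‖ck k‖ := by
            exact mul_le_mul_of_nonneg_left hb
              (mul_nonneg (div_nonneg hF2nn hF1p.le) (norm_nonneg _))
    have key2 : ∀ j ∈ A2.toFinsetᶜ,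
        ‖g2 k j‖ ≤ ((F1 (x k) j / F2 (x k) j) * ‖Dc F2 j (x k)‖) * ‖ck k‖ := by
      intro j hjf
      have hj : j ∉ A2 := by rw [Finset.mem_compl, Set.mem_toFinset] at hjf; exact hjf
      have hF2p : 0 < F2 (x k) j := h2 j hj
      have hF1nn : 0 ≤ F1 (x k) j := ((hkkt k).feas j).2.1
      have hjA1 : j ∈ A1 := by
        rw [hA1def]; exact Set.mem_union_left _ ⟨(hnA2 j hj).2, (hnA2 j hj).1⟩
      have hν2 : ν2 k j = 0 := by
        rcases mul_eq_zero.mp ((hkkt k).comp_nu2 j) with h | h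
        · exact h
        · exact absurd h (ne_of_gt hF2p)
      have hcoef : |ν2 k j - η k j * F1 (x k) j|
          ≤ (F1 (x k) j / F2 (x k) j) * |ν1 k j - η k j * F2 (x k) j| := by
        by_cases hη : η k j = 0
        · simp only [hν2, hη, zero_mul, sub_zero, zero_sub, abs_neg, abs_zero]
          exact mul_nonneg (div_nonneg hF1nn hF2p.le) (abs_nonneg _)
        · have hteq : F1 (x k) j * F2 (x k) j = t k := by
            rcases mul_eq_zero.mp ((hkkt k).comp_eta j) with h | h
            · exact absurd h hη
            · linarith
          have hF1p : 0 < F1 (x k) j := by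
            by_contra hcon
            push_neg at hcon
            nlinarith [htpos k, mul_nonneg hF2p.le (neg_nonneg.mpr hcon)]
          have hν1 : ν1 k j = 0 := by
            rcases mul_eq_zero.mp ((hkkt k).comp_nu1 j) with h | h
            · exact h
            · exact absurd h (ne_of_gt hF1p)
          rw [hν1, hν2, zero_sub, zero_sub, abs_neg, abs_neg, abs_mul, abs_mul,
            abs_of_nonneg ((hkkt k).eta_nn j), abs_of_nonneg hF2p.le, abs_of_nonneg hF1p.le]
          have hq : F1 (x k) j / F2 (x k) j * (η k j * F2 (x k) j) = η k j * F1 (x k) j := by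
            field_simp
          exact le_of_eq hq.symm
      have hb : |ν1 k j - η k j * F2 (x k) j| ≤ ‖ck k‖ := by
        have hcki : ck k (Sum.inl ⟨j, hjA1⟩) = ν1 k j - η k j * F2 (x k) j := by
          simp only [hckdef, Sum.elim_inl]
        calc |ν1 k j - η k j * F2 (x k) j| = ‖ck k (Sum.inl ⟨j, hjA1⟩)‖ := by
              rw [hcki, Real.norm_eq_abs]
          _ ≤ ‖ck k‖ := norm_le_pi_norm _ _
      calc ‖g2 k j‖ = |ν2 k j - η k j * F1 (x k) j| * ‖Dc F2 j (x k)‖ := by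
            simp only [hg2def]
            rw [norm_smul (ν2 k j - η k j * F1 (x k) j) (Dc F2 j (x k)), Real.norm_eq_abs]
        _ ≤ ((F1 (x k) j / F2 (x k) j) * |ν1 k j - η k j * F2 (x k) j|) * ‖Dc F2 j (x k)‖ :=
            mul_le_mul_of_nonneg_right hcoef (norm_nonneg _)
        _ = ((F1 (x k) j / F2 (x k) j) * ‖Dc F2 j (x k)‖) * |ν1 k j - η k j * F2 (x k) j| := by
            ring
        _ ≤ ((F1 (x k) j / F2 (x k) j) * ‖Dc F2 j (x k)‖) * ‖ck k‖ := by
            exact mul_le_mul_of_nonneg_left hb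
              (mul_nonneg (div_nonneg hF1nn hF2p.le) (norm_nonneg _))
    have b1 : ‖∑ j ∈ A1.toFinsetᶜ, g1 k j‖
        ≤ (∑ j ∈ A1.toFinsetᶜ, (F2 (x k) j / F1 (x k) j) * ‖Dc F1 j (x k)‖) * ‖ck k‖ := by
      refine le_trans (norm_sum_le _ _) ?_
      rw [Finset.sum_mul]
      exact Finset.sum_le_sum key1
    have b2 : ‖∑ j ∈ A2.toFinsetᶜ, g2 k j‖
        ≤ (∑ j ∈ A2.toFinsetᶜ, (F1 (x k) j / F2 (x k) j) * ‖Dc F2 j (x k)‖) * ‖ck k‖ := by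
      refine le_trans (norm_sum_le _ _) ?_
      rw [Finset.sum_mul]
      exact Finset.sum_le_sum key2
    refine le_trans (norm_add_le _ _) ?_
    refine le_trans (add_le_add b1 b2) (le_of_eq ?_)
    ring
  have hd2lim : Tendsto d2 atTop (𝓝 0) := by
    have h0 : (0:ℝ) = (∑ j ∈ A1.toFinsetᶜ, (0:ℝ)) + ∑ j ∈ A2.toFinsetᶜ, (0:ℝ) := by simp
    rw [hd2def, h0]
    apply Tendsto.add
    · apply tendsto_finset_sum
      intro j hj
      have hj' : j ∉ A1 := by rw [Finset.mem_compl, Set.mem_toFinset] at hj; exact hj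
      have hlim := ((hxF2 j).div (hxF1 j) (ne_of_gt (hnA1 j hj').1)).mul (hxD1 j).norm
      have hz : F2 xbar j = 0 := (hnA1 j hj').2
      rw [hz] at hlim
      simpa using hlim
    · apply tendsto_finset_sum
      intro j hj
      have hj' : j ∉ A2 := by rw [Finset.mem_compl, Set.mem_toFinset] at hj; exact hj
      have hlim := ((hxF1 j).div (hxF2 j) (ne_of_gt (hnA2 j hj').1)).mul (hxD2 j).norm
      have hz : F1 xbar j = 0 := (hnA2 j hj').2
      rw [hz] at hlim
      simpa using hlim
  set d1 : ℕ → ℝ := fun k => ∑ i : ↥A1 ⊕ ↥A2, ‖Wk k i - Wb i‖ with hd1def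
  have hd1nn : ∀ k, 0 ≤ d1 k := by
    intro k
    simp only [hd1def]
    exact Finset.sum_nonneg fun i _ => norm_nonneg _
  have hd1lim : Tendsto d1 atTop (𝓝 0) := by
    have h0 : (0:ℝ) = ∑ i : ↥A1 ⊕ ↥A2, (0:ℝ) := by simp
    rw [hd1def, h0]
    apply tendsto_finset_sum
    intro i _
    rcases i with i | i
    · have hlim : Tendsto (fun k => Wk k (Sum.inl i) - Wb (Sum.inl i)) atTop
          (𝓝 (Dc F1 i.1 xbar - Dc F1 i.1 xbar)) := by
        simp only [hWkdef, hWbdef, Sum.elim_inl]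
        exact (hxD1 i.1).sub tendsto_const_nhds
      simpa using hlim.norm
    · have hlim : Tendsto (fun k => Wk k (Sum.inr i) - Wb (Sum.inr i)) atTop
          (𝓝 (Dc F2 i.1 xbar - Dc F2 i.1 xbar)) := by
        simp only [hWkdef, hWbdef, Sum.elim_inr]
        exact (hxD2 i.1).sub tendsto_const_nhds
      simpa using hlim.norm
  have hpert : ∀ (k : ℕ) (c : (↥A1 ⊕ ↥A2) → ℝ),
      ‖(∑ i, c i • Wb i) - ∑ i, c i • Wk k i‖ ≤ d1 k * ‖c‖ := by
    intro k c
    rw [← Finset.sum_sub_distrib]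
    refine le_trans (norm_sum_le _ _) ?_
    simp only [hd1def]
    rw [Finset.sum_mul]
    refine Finset.sum_le_sum fun i _ => ?_
    calc ‖c i • Wb i - c i • Wk k i‖ = ‖c i‖ * ‖Wb i - Wk k i‖ := by
          rw [← smul_sub (c i) (Wb i) (Wk k i), norm_smul (c i) (Wb i - Wk k i)]
      _ = ‖Wk k i - Wb i‖ * ‖c i‖ := by rw [norm_sub_rev]; ring
      _ ≤ ‖Wk k i - Wb i‖ * ‖c‖ := mul_le_mul_of_nonneg_left (norm_le_pi_norm c i) (norm_nonneg _)
  have hVb : ∀ᶠ k in atTop, ‖fderiv ℝ f (x k)‖ ≤ ‖fderiv ℝ f xbar‖ + 1 :=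
    hxDf.norm.eventually (eventually_le_nhds (lt_add_one _))
  have hsmall : ∀ᶠ k in atTop, d1 k + d2 k ≤ r / 2 := by
    have hlim : Tendsto (fun k => d1 k + d2 k) atTop (𝓝 (0 + 0)) := hd1lim.add hd2lim
    rw [add_zero] at hlim
    exact hlim.eventually (eventually_le_nhds (by linarith))
  set B : ℝ := 2 * (‖fderiv ℝ f xbar‖ + 1) / r with hBdef
  have hckB : ∀ᶠ k in atTop, ‖ck k‖ ≤ B := by
    filter_upwards [hresbound, hVb, hsmall] with k hres hv hsm
    have h0 : r * ‖ck k‖ ≤ ‖∑ i, ck k i • Wb i‖ := hanti (ck k)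
    have h1 : ‖∑ i, ck k i • Wb i‖ ≤ ‖∑ i, ck k i • Wk k i‖ + d1 k * ‖ck k‖ := by
      have hp := hpert k (ck k)
      have htri : ‖∑ i, ck k i • Wb i‖ ≤ ‖∑ i, ck k i • Wk k i‖
          + ‖(∑ i, ck k i • Wb i) - ∑ i, ck k i • Wk k i‖ := by
        have h := norm_add_le (∑ i, ck k i • Wk k i)
          ((∑ i, ck k i • Wb i) - ∑ i, ck k i • Wk k i)
        simpa using h
      linarith
    have h2 : ‖∑ i, ck k i • Wk k i‖ ≤ (‖fderiv ℝ f xbar‖ + 1) + d2 k * ‖ck k‖ := by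
      have heq : (∑ i, ck k i • Wk k i) = fderiv ℝ f (x k) - Rk k := by
        rw [hsplit k]; abel
      rw [heq]
      exact le_trans (norm_sub_le _ _) (add_le_add hv hres)
    have hnn : (0:ℝ) ≤ ‖ck k‖ := norm_nonneg _
    have h3 : d1 k * ‖ck k‖ + d2 k * ‖ck k‖ ≤ r / 2 * ‖ck k‖ := by
      nlinarith [mul_le_mul_of_nonneg_right hsm hnn]
    have hAB : r * ‖ck k‖ ≤ (‖fderiv ℝ f xbar‖ + 1) + d2 k * ‖ck k‖ + d1 k * ‖ck k‖ :=
      (h0.trans h1).trans (add_le_add_left h2 _)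
    have h5 : r * ‖ck k‖ ≤ (‖fderiv ℝ f xbar‖ + 1) + r / 2 * ‖ck k‖ := by
      refine hAB.trans ?_
      have h6 := add_le_add_right h3 (‖fderiv ℝ f xbar‖ + 1)
      calc (‖fderiv ℝ f xbar‖ + 1) + d2 k * ‖ck k‖ + d1 k * ‖ck k‖
          = (‖fderiv ℝ f xbar‖ + 1) + (d1 k * ‖ck k‖ + d2 k * ‖ck k‖) := by ring
        _ ≤ _ := h6
    have h4 : r / 2 * ‖ck k‖ ≤ ‖fderiv ℝ f xbar‖ + 1 := by
      have h7 := sub_le_sub_right h5 (r / 2 * ‖ck k‖)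
      calc r / 2 * ‖ck k‖ = r * ‖ck k‖ - r / 2 * ‖ck k‖ := by ring
        _ ≤ (‖fderiv ℝ f xbar‖ + 1) + r / 2 * ‖ck k‖ - r / 2 * ‖ck k‖ := h7
        _ = ‖fderiv ℝ f xbar‖ + 1 := by ring
    rw [hBdef, le_div_iff₀ hr]
    calc ‖ck k‖ * r = 2 * (r / 2 * ‖ck k‖) := by ring
      _ ≤ 2 * (‖fderiv ℝ f xbar‖ + 1) := by
          exact mul_le_mul_of_nonneg_left h4 (by norm_num)
  have hTcb : (∑ i, cb i • Wb i) = fderiv ℝ f xbar := by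
    have e2 : (∑ i, cb i • Wb i)
        = (∑ j ∈ A1.toFinset, (σ1 j + ϱ1 j) • Dc F1 j xbar)
          + ∑ j ∈ A2.toFinset, (σ2 j + ϱ2 j) • Dc F2 j xbar := by
      rw [Fintype.sum_sum_type,
        ← Finset.sum_set_coe (f := fun j => (σ1 j + ϱ1 j) • Dc F1 j xbar) A1,
        ← Finset.sum_set_coe (f := fun j => (σ2 j + ϱ2 j) • Dc F2 j xbar) A2]
      simp only [hcbdef, hWbdef, Sum.elim_inl, Sum.elim_inr]
    have v1 : ∀ j ∈ Finset.univ, j ∉ A1.toFinset → (σ1 j + ϱ1 j) • Dc F1 j xbar = 0 := by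
      intro j _ hj
      rw [Set.mem_toFinset] at hj
      have hs : σ1 j = 0 := hwstat.supp_s1 j
        (fun h => hj (by rw [hA1def]; exact Set.mem_union_left _ h))
      have hrho : ϱ1 j = 0 := hwstat.supp_r1 j
        (fun h => hj (by rw [hA1def]; exact Set.mem_union_right _ h))
      rw [hs, hrho, add_zero, zero_smul]
    have v2 : ∀ j ∈ Finset.univ, j ∉ A2.toFinset → (σ2 j + ϱ2 j) • Dc F2 j xbar = 0 := by
      intro j _ hj
      rw [Set.mem_toFinset] at hj
      have hs : σ2 j = 0 := hwstat.supp_s2 j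
        (fun h => hj (by rw [hA2def]; exact Set.mem_union_left _ h))
      have hrho : ϱ2 j = 0 := hwstat.supp_r2 j
        (fun h => hj (by rw [hA2def]; exact Set.mem_union_right _ h))
      rw [hs, hrho, add_zero, zero_smul]
    rw [e2, Finset.sum_subset (Finset.subset_univ _) v1,
      Finset.sum_subset (Finset.subset_univ _) v2, hwstat.stat, ← Finset.sum_add_distrib]
    refine Finset.sum_congr rfl fun j _ => ?_
    module
  have herr : Tendsto (fun k => ‖ck k - cb‖) atTop (𝓝 0) := by
    have hub : ∀ᶠ k in atTop, ‖ck k - cb‖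
        ≤ (‖fderiv ℝ f (x k) - fderiv ℝ f xbar‖ + d2 k * B + d1 k * B) / r := by
      filter_upwards [hresbound, hckB, hd2nn] with k hres hkB hd2n
      have h0 : r * ‖ck k - cb‖ ≤ ‖∑ i, (ck k - cb) i • Wb i‖ := hanti _
      have hs2 : (∑ i, ck k i • Wk k i) = fderiv ℝ f (x k) - Rk k := by
        rw [hsplit k]; abel
      have hsum : (∑ i, (ck k - cb) i • Wb i)
          = (fderiv ℝ f (x k) - fderiv ℝ f xbar) - Rk k
            + ((∑ i, ck k i • Wb i) - ∑ i, ck k i • Wk k i) := by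
        have hs1 : (∑ i, (ck k - cb) i • Wb i)
            = (∑ i, ck k i • Wb i) - ∑ i, cb i • Wb i := by
          rw [← Finset.sum_sub_distrib]
          refine Finset.sum_congr rfl fun i _ => ?_
          rw [Pi.sub_apply, sub_smul (ck k i) (cb i) (Wb i)]
        rw [hs1, hTcb, hs2]
        abel
      have hnorm : ‖∑ i, (ck k - cb) i • Wb i‖
          ≤ ‖fderiv ℝ f (x k) - fderiv ℝ f xbar‖ + d2 k * B + d1 k * B := by
        rw [hsum]
        refine le_trans (norm_add_le _ _) ?_
        have p1 : ‖(fderiv ℝ f (x k) - fderiv ℝ f xbar) - Rk k‖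
            ≤ ‖fderiv ℝ f (x k) - fderiv ℝ f xbar‖ + d2 k * B := by
          refine le_trans (norm_sub_le _ _) ?_
          have hRb : ‖Rk k‖ ≤ d2 k * B := le_trans hres (mul_le_mul_of_nonneg_left hkB hd2n)
          linarith
        have p2 : ‖(∑ i, ck k i • Wb i) - ∑ i, ck k i • Wk k i‖ ≤ d1 k * B :=
          le_trans (hpert k (ck k)) (mul_le_mul_of_nonneg_left hkB (hd1nn k))
        linarith
      have hcomb := h0.trans hnorm
      rw [le_div_iff₀' hr]
      exact hcomb
    have hvlim : Tendsto (fun k => ‖fderiv ℝ f (x k) - fderiv ℝ f xbar‖) atTop (𝓝 0) := by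
      have hvsub : Tendsto (fun k => fderiv ℝ f (x k) - fderiv ℝ f xbar) atTop
          (𝓝 (fderiv ℝ f xbar - fderiv ℝ f xbar)) := hxDf.sub tendsto_const_nhds
      simpa using hvsub.norm
    have hulim : Tendsto (fun k =>
        (‖fderiv ℝ f (x k) - fderiv ℝ f xbar‖ + d2 k * B + d1 k * B) / r) atTop (𝓝 0) := by
      have hl : Tendsto (fun k => ‖fderiv ℝ f (x k) - fderiv ℝ f xbar‖ + d2 k * B + d1 k * B)
          atTop (𝓝 (0 + 0 * B + 0 * B)) := (hvlim.add (hd2lim.mul_const B)).add (hd1lim.mul_const B)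
      have h00 : (0:ℝ) + 0 * B + 0 * B = 0 := by ring
      rw [h00] at hl
      simpa using hl.div_const r
    exact squeeze_zero' (Eventually.of_forall fun k => norm_nonneg _) hub hulim
  have hcoord : ∀ i, Tendsto (fun k => ck k i) atTop (𝓝 (cb i)) := by
    intro i
    have h1 : Tendsto (fun k => ck k i - cb i) atTop (𝓝 0) := by
      refine squeeze_zero_norm' (Eventually.of_forall fun k => ?_) herr
      have h := norm_le_pi_norm (ck k - cb) i
      simpa using h
    have h2 := h1.add_const (cb i)
    rw [zero_add] at h2
    simpa using h2
  -- membership helpers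
  have hHmem : ∀ (k : ℕ) (j : Fin κ), η k j ≠ 0 → j ∈ Hset F1 F2 (t k) (x k) := by
    intro k j hη
    rcases mul_eq_zero.mp ((hkkt k).comp_eta j) with h | h
    · exact absurd h hη
    · show F1 (x k) j * F2 (x k) j = t k
      linarith
  have hN1mem : ∀ (k : ℕ) (j : Fin κ), ν1 k j ≠ 0 → j ∈ N1set F1 (x k) := by
    intro k j hν
    rcases mul_eq_zero.mp ((hkkt k).comp_nu1 j) with h | h
    · exact absurd h hν
    · exact h
  have hN2mem : ∀ (k : ℕ) (j : Fin κ), ν2 k j ≠ 0 → j ∈ N2set F2 (x k) := by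
    intro k j hν
    rcases mul_eq_zero.mp ((hkkt k).comp_nu2 j) with h | h
    · exact absurd h hν
    · exact h
  have hinlneg : ∀ (j : Fin κ) (hm : j ∈ A1), cb (Sum.inl ⟨j, hm⟩) < 0 →
      ∀ᶠ k in atTop, j ∈ Hset F1 F2 (t k) (x k) := by
    intro j hm hneg
    filter_upwards [(hcoord (Sum.inl ⟨j, hm⟩)).eventually_lt_const hneg] with k hk
    simp only [hckdef, Sum.elim_inl] at hk
    have hη : η k j ≠ 0 := by
      intro h0
      rw [h0, zero_mul, sub_zero] at hk
      exact absurd hk (not_lt.mpr ((hkkt k).nu1_nn j))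
    exact hHmem k j hη
  have hinrneg : ∀ (j : Fin κ) (hm : j ∈ A2), cb (Sum.inr ⟨j, hm⟩) < 0 →
      ∀ᶠ k in atTop, j ∈ Hset F1 F2 (t k) (x k) := by
    intro j hm hneg
    filter_upwards [(hcoord (Sum.inr ⟨j, hm⟩)).eventually_lt_const hneg] with k hk
    simp only [hckdef, Sum.elim_inr] at hk
    have hη : η k j ≠ 0 := by
      intro h0
      rw [h0, zero_mul, sub_zero] at hk
      exact absurd hk (not_lt.mpr ((hkkt k).nu2_nn j))
    exact hHmem k j hη
  have hinlpos : ∀ (j : Fin κ) (hm : j ∈ A1), 0 < cb (Sum.inl ⟨j, hm⟩) →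
      ∀ᶠ k in atTop, j ∈ N1set F1 (x k) := by
    intro j hm hpos
    filter_upwards [(hcoord (Sum.inl ⟨j, hm⟩)).eventually_const_lt hpos] with k hk
    simp only [hckdef, Sum.elim_inl] at hk
    have hge : 0 ≤ η k j * F2 (x k) j :=
      mul_nonneg ((hkkt k).eta_nn j) ((hkkt k).feas j).2.2
    have hν : ν1 k j ≠ 0 := by
      intro h0
      rw [h0, zero_sub] at hk
      linarith
    exact hN1mem k j hν
  have hinrpos : ∀ (j : Fin κ) (hm : j ∈ A2), 0 < cb (Sum.inr ⟨j, hm⟩) →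
      ∀ᶠ k in atTop, j ∈ N2set F2 (x k) := by
    intro j hm hpos
    filter_upwards [(hcoord (Sum.inr ⟨j, hm⟩)).eventually_const_lt hpos] with k hk
    simp only [hckdef, Sum.elim_inr] at hk
    have hge : 0 ≤ η k j * F1 (x k) j :=
      mul_nonneg ((hkkt k).eta_nn j) ((hkkt k).feas j).2.1
    have hν : ν2 k j ≠ 0 := by
      intro h0
      rw [h0, zero_sub] at hk
      linarith
    exact hN2mem k j hν
  have hmain : ∀ᶠ k in atTop, ∀ j : Fin κ,
      ((j ∈ a01 F1 F2 xbar ∧ σ1 j < 0) → j ∈ Hset F1 F2 (t k) (x k)) ∧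
      ((j ∈ a01 F1 F2 xbar ∧ 0 < σ1 j) → j ∈ N1set F1 (x k)) ∧
      ((j ∈ a10 F1 F2 xbar ∧ σ2 j < 0) → j ∈ Hset F1 F2 (t k) (x k)) ∧
      ((j ∈ a10 F1 F2 xbar ∧ 0 < σ2 j) → j ∈ N2set F2 (x k)) ∧
      ((j ∈ a00 F1 F2 xbar ∧ ϱ1 j < 0 ∧ ϱ2 j < 0) → j ∈ Hset F1 F2 (t k) (x k)) ∧
      ((j ∈ a00 F1 F2 xbar ∧ 0 < ϱ1 j ∧ 0 < ϱ2 j) →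
        j ∈ N1set F1 (x k) ∩ N2set F2 (x k)) := by
    rw [eventually_all]
    intro j
    have c1 : ∀ᶠ k in atTop,
        (j ∈ a01 F1 F2 xbar ∧ σ1 j < 0) → j ∈ Hset F1 F2 (t k) (x k) := by
      by_cases hc : j ∈ a01 F1 F2 xbar ∧ σ1 j < 0
      · obtain ⟨hj, hs⟩ := hc
        have hm : j ∈ A1 := by rw [hA1def]; exact Set.mem_union_left _ hj
        have hρ : ϱ1 j = 0 := hwstat.supp_r1 j (fun h => absurd h.2 (ne_of_gt hj.2))
        have hcbeq : cb (Sum.inl ⟨j, hm⟩) = σ1 j + ϱ1 j := by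
          simp only [hcbdef, Sum.elim_inl]
        have hcbv : cb (Sum.inl ⟨j, hm⟩) < 0 := by rw [hcbeq, hρ, add_zero]; exact hs
        exact (hinlneg j hm hcbv).mono fun k hk _ => hk
      · exact Eventually.of_forall fun k h => absurd h hc
    have c2 : ∀ᶠ k in atTop,
        (j ∈ a01 F1 F2 xbar ∧ 0 < σ1 j) → j ∈ N1set F1 (x k) := by
      by_cases hc : j ∈ a01 F1 F2 xbar ∧ 0 < σ1 j
      · obtain ⟨hj, hs⟩ := hc
        have hm : j ∈ A1 := by rw [hA1def]; exact Set.mem_union_left _ hj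
        have hρ : ϱ1 j = 0 := hwstat.supp_r1 j (fun h => absurd h.2 (ne_of_gt hj.2))
        have hcbeq : cb (Sum.inl ⟨j, hm⟩) = σ1 j + ϱ1 j := by
          simp only [hcbdef, Sum.elim_inl]
        have hcbv : 0 < cb (Sum.inl ⟨j, hm⟩) := by rw [hcbeq, hρ, add_zero]; exact hs
        exact (hinlpos j hm hcbv).mono fun k hk _ => hk
      · exact Eventually.of_forall fun k h => absurd h hc
    have c3 : ∀ᶠ k in atTop,
        (j ∈ a10 F1 F2 xbar ∧ σ2 j < 0) → j ∈ Hset F1 F2 (t k) (x k) := by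
      by_cases hc : j ∈ a10 F1 F2 xbar ∧ σ2 j < 0
      · obtain ⟨hj, hs⟩ := hc
        have hm : j ∈ A2 := by rw [hA2def]; exact Set.mem_union_left _ hj
        have hρ : ϱ2 j = 0 := hwstat.supp_r2 j (fun h => absurd h.1 (ne_of_gt hj.1))
        have hcbeq : cb (Sum.inr ⟨j, hm⟩) = σ2 j + ϱ2 j := by
          simp only [hcbdef, Sum.elim_inr]
        have hcbv : cb (Sum.inr ⟨j, hm⟩) < 0 := by rw [hcbeq, hρ, add_zero]; exact hs
        exact (hinrneg j hm hcbv).mono fun k hk _ => hk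
      · exact Eventually.of_forall fun k h => absurd h hc
    have c4 : ∀ᶠ k in atTop,
        (j ∈ a10 F1 F2 xbar ∧ 0 < σ2 j) → j ∈ N2set F2 (x k) := by
      by_cases hc : j ∈ a10 F1 F2 xbar ∧ 0 < σ2 j
      · obtain ⟨hj, hs⟩ := hc
        have hm : j ∈ A2 := by rw [hA2def]; exact Set.mem_union_left _ hj
        have hρ : ϱ2 j = 0 := hwstat.supp_r2 j (fun h => absurd h.1 (ne_of_gt hj.1))
        have hcbeq : cb (Sum.inr ⟨j, hm⟩) = σ2 j + ϱ2 j := by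
          simp only [hcbdef, Sum.elim_inr]
        have hcbv : 0 < cb (Sum.inr ⟨j, hm⟩) := by rw [hcbeq, hρ, add_zero]; exact hs
        exact (hinrpos j hm hcbv).mono fun k hk _ => hk
      · exact Eventually.of_forall fun k h => absurd h hc
    have c5 : ∀ᶠ k in atTop,
        (j ∈ a00 F1 F2 xbar ∧ ϱ1 j < 0 ∧ ϱ2 j < 0) → j ∈ Hset F1 F2 (t k) (x k) := by
      by_cases hc : j ∈ a00 F1 F2 xbar ∧ ϱ1 j < 0 ∧ ϱ2 j < 0
      · obtain ⟨hj, hs, -⟩ := hc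
        have hm : j ∈ A1 := by rw [hA1def]; exact Set.mem_union_right _ hj
        have hσ : σ1 j = 0 := hwstat.supp_s1 j (fun h => absurd hj.2 (ne_of_gt h.2))
        have hcbeq : cb (Sum.inl ⟨j, hm⟩) = σ1 j + ϱ1 j := by
          simp only [hcbdef, Sum.elim_inl]
        have hcbv : cb (Sum.inl ⟨j, hm⟩) < 0 := by rw [hcbeq, hσ, zero_add]; exact hs
        exact (hinlneg j hm hcbv).mono fun k hk _ => hk
      · exact Eventually.of_forall fun k h => absurd h hc
    have c6 : ∀ᶠ k in atTop,
        (j ∈ a00 F1 F2 xbar ∧ 0 < ϱ1 j ∧ 0 < ϱ2 j) →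
          j ∈ N1set F1 (x k) ∩ N2set F2 (x k) := by
      by_cases hc : j ∈ a00 F1 F2 xbar ∧ 0 < ϱ1 j ∧ 0 < ϱ2 j
      · obtain ⟨hj, hs1, hs2⟩ := hc
        have hm1 : j ∈ A1 := by rw [hA1def]; exact Set.mem_union_right _ hj
        have hm2 : j ∈ A2 := by rw [hA2def]; exact Set.mem_union_right _ hj
        have hσ1 : σ1 j = 0 := hwstat.supp_s1 j (fun h => absurd hj.2 (ne_of_gt h.2))
        have hσ2 : σ2 j = 0 := hwstat.supp_s2 j (fun h => absurd hj.1 (ne_of_gt h.1))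
        have hcbeq1 : cb (Sum.inl ⟨j, hm1⟩) = σ1 j + ϱ1 j := by
          simp only [hcbdef, Sum.elim_inl]
        have hcbeq2 : cb (Sum.inr ⟨j, hm2⟩) = σ2 j + ϱ2 j := by
          simp only [hcbdef, Sum.elim_inr]
        have hv1 : 0 < cb (Sum.inl ⟨j, hm1⟩) := by rw [hcbeq1, hσ1, zero_add]; exact hs1
        have hv2 : 0 < cb (Sum.inr ⟨j, hm2⟩) := by rw [hcbeq2, hσ2, zero_add]; exact hs2
        filter_upwards [hinlpos j hm1 hv1, hinrpos j hm2 hv2] with k h1 h2 _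
        exact ⟨h1, h2⟩
      · exact Eventually.of_forall fun k h => absurd h hc
    exact c1.and (c2.and (c3.and (c4.and (c5.and c6))))
  obtain ⟨N, hN⟩ := eventually_atTop.mp hmain
  refine ⟨N, fun k hk => ?_⟩
  have h := hN k hk
  exact ⟨fun j hj => (h j).1 hj, fun j hj => (h j).2.1 hj, fun j hj => (h j).2.2.1 hj,
    fun j hj => (h j).2.2.2.1 hj, fun j hj => (h j).2.2.2.2.1 hj,
    fun j hj => (h j).2.2.2.2.2 hj⟩

end MPCCPaper
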